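/- Let a ∈ ℝ, ℓ > 0, δ > 0, integers m, m', n ≥ 1 with m ≠ m', 0 < ε < 1/2, and let χ : ℝ → ℝ be continuous with 0 ≤ χ(x) ≤ 1 for all x and χ(x) = 1 for all x ∈ [ε, 1−ε]. Define ψ_{m,n}(x,y) = χ((x−a)/ℓ)·sin(πm(x−a)/ℓ)·sin(πny/δ) and similarly ψ_{m',n}. Then | ∫_{[a,a+ℓ]×[0,δ]} ψ_{m,n}(x,y)·ψ_{m',n}(x,y) dx dy | ≤ ε·ℓ·δ. -/

import Mathlib

open Real MeasureTheory intervalIntegral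

lemma cos_int_aux (a ℓ : ℝ) (hℓ : ℓ ≠ 0) (k : ℤ) (hk : k ≠ 0) :
    ∫ x in a..(a + ℓ), Real.cos (π * (k : ℝ) * (x - a) / ℓ) = 0 := by
  have harg : ∀ x : ℝ, π * (k : ℝ) * (x - a) / ℓ = (π * k / ℓ) * (x - a) := fun x => by ring
  simp_rw [harg]
  rw [intervalIntegral.integral_comp_sub_right (fun x => Real.cos ((π * k / ℓ) * x)) a]
  simp only [sub_self, add_sub_cancel_left]
  have hc : (π * (k : ℝ) / ℓ) ≠ 0 :=
    div_ne_zero (mul_ne_zero Real.pi_ne_zero (Int.cast_ne_zero.mpr hk)) hℓ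
  rw [intervalIntegral.integral_comp_mul_left (fun x => Real.cos x) hc]
  rw [integral_cos]
  have h1 : (π * (k : ℝ) / ℓ) * ℓ = (k : ℝ) * π := by field_simp
  rw [mul_zero, h1, Real.sin_int_mul_pi, Real.sin_zero]
  simp

lemma sin_mul_sin_eq (A B : ℝ) :
    Real.sin A * Real.sin B = (Real.cos (A - B) - Real.cos (A + B)) / 2 := by
  rw [Real.cos_sub_cos]
  have h1 : (A - B + (A + B)) / 2 = A := by ring
  have h2 : (A - B - (A + B)) / 2 = -B := by ring
  rw [h1, h2, Real.sin_neg]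
  ring

-- y-integral
lemma sin_sq_int (δ : ℝ) (hδ : 0 < δ) (n : ℕ) (hn : 1 ≤ n) :
    ∫ y in (0:ℝ)..δ, Real.sin (π * (n : ℝ) * y / δ) ^ 2 = δ / 2 := by
  have hc : (π * (n : ℝ) / δ) ≠ 0 := by
    apply div_ne_zero (mul_ne_zero Real.pi_ne_zero _) hδ.ne'
    exact_mod_cast Nat.one_le_iff_ne_zero.mp hn
  have harg : ∀ y : ℝ, π * (n : ℝ) * y / δ = (π * n / δ) * y := fun y => by ring
  simp_rw [harg]
  rw [intervalIntegral.integral_comp_mul_left (fun x => Real.sin x ^ 2) hc]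
  rw [integral_sin_sq]
  have h1 : (π * (n : ℝ) / δ) * δ = (n : ℝ) * π := by field_simp
  rw [mul_zero, h1, Real.sin_nat_mul_pi, Real.sin_zero]
  have hn0 : (n : ℝ) ≠ 0 := by exact_mod_cast Nat.one_le_iff_ne_zero.mp hn
  field_simp
  ring_nf
  field_simp [Real.pi_ne_zero, hn0]

-- orthogonality
lemma sin_orth (a ℓ : ℝ) (hℓ : 0 < ℓ) (m m' : ℕ) (hmm' : m ≠ m') :
    ∫ x in a..(a + ℓ),
      Real.sin (π * (m : ℝ) * (x - a) / ℓ) * Real.sin (π * (m' : ℝ) * (x - a) / ℓ) = 0 := by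
  have hk1 : ((m : ℤ) - m') ≠ 0 := sub_ne_zero.mpr (by exact_mod_cast hmm')
  have hk2 : ((m : ℤ) + m') ≠ 0 := by
    rcases Nat.eq_zero_or_pos m with h | h
    · omega
    · positivity
  have heq : ∀ x : ℝ,
      Real.sin (π * (m : ℝ) * (x - a) / ℓ) * Real.sin (π * (m' : ℝ) * (x - a) / ℓ) =
        (Real.cos (π * (((m : ℤ) - m' : ℤ) : ℝ) * (x - a) / ℓ) -
          Real.cos (π * (((m : ℤ) + m' : ℤ) : ℝ) * (x - a) / ℓ)) / 2 := by
    intro x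
    rw [sin_mul_sin_eq]
    congr 2
    · congr 1; push_cast; ring
    · congr 1; push_cast; ring
  simp_rw [heq]
  have hint : ∀ k : ℤ, IntervalIntegrable
      (fun x => Real.cos (π * (k : ℝ) * (x - a) / ℓ)) volume a (a + ℓ) := by
    intro k
    apply Continuous.intervalIntegrable
    fun_prop
  rw [intervalIntegral.integral_div, intervalIntegral.integral_sub (hint _) (hint _),
    cos_int_aux a ℓ hℓ.ne' _ hk1, cos_int_aux a ℓ hℓ.ne' _ hk2]
  norm_num

theorem stmt_14 (a ℓ δ : ℝ) (hℓ : 0 < ℓ) (hδ : 0 < δ)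
    (m m' n : ℕ) (hm : 1 ≤ m) (hm' : 1 ≤ m') (hn : 1 ≤ n) (hmm' : m ≠ m')
    (ε : ℝ) (hε : 0 < ε) (hε' : ε < 1 / 2)
    (χ : ℝ → ℝ) (hχ_cont : Continuous χ)
    (hχ_nonneg : ∀ x, 0 ≤ χ x) (hχ_le : ∀ x, χ x ≤ 1)
    (hχ_one : ∀ x ∈ Set.Icc ε (1 - ε), χ x = 1)
    (ψ ψ' : ℝ → ℝ → ℝ)
    (hψ : ∀ x y, ψ x y =
      χ ((x - a) / ℓ) * Real.sin (π * m * (x - a) / ℓ) * Real.sin (π * n * y / δ))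
    (hψ' : ∀ x y, ψ' x y =
      χ ((x - a) / ℓ) * Real.sin (π * m' * (x - a) / ℓ) * Real.sin (π * n * y / δ)) :
    |∫ z in Set.Icc a (a + ℓ) ×ˢ Set.Icc (0 : ℝ) δ, ψ z.1 z.2 * ψ' z.1 z.2|
      ≤ ε * ℓ * δ := by
  set F : ℝ → ℝ := fun x => χ ((x - a) / ℓ) ^ 2 *
    (Real.sin (π * m * (x - a) / ℓ) * Real.sin (π * m' * (x - a) / ℓ)) with hF
  set G : ℝ → ℝ := fun y => Real.sin (π * n * y / δ) ^ 2 with hG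
  have hfun : (fun z : ℝ × ℝ => ψ z.1 z.2 * ψ' z.1 z.2) = fun z => F z.1 * G z.2 := by
    funext z; rw [hψ, hψ']; simp only [hF, hG]; ring
  rw [hfun, MeasureTheory.Measure.volume_eq_prod, MeasureTheory.setIntegral_prod_mul]
  -- y integral
  have hGval : ∫ y in Set.Icc (0:ℝ) δ, G y = δ / 2 := by
    rw [MeasureTheory.integral_Icc_eq_integral_Ioc, ← intervalIntegral.integral_of_le hδ.le]
    exact sin_sq_int δ hδ n hn
  rw [hGval]
  -- x integral bound
  have hS : ∀ x : ℝ, |Real.sin (π * m * (x - a) / ℓ) * Real.sin (π * m' * (x - a) / ℓ)| ≤ 1 := by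
    intro x
    rw [abs_mul]
    exact mul_le_one₀ (Real.abs_sin_le_one _) (abs_nonneg _) (Real.abs_sin_le_one _)
  set D : ℝ → ℝ := fun x => (χ ((x - a) / ℓ) ^ 2 - 1) *
    (Real.sin (π * m * (x - a) / ℓ) * Real.sin (π * m' * (x - a) / ℓ)) with hD
  have hDbound : ∀ x : ℝ, |D x| ≤ 1 := by
    intro x
    rw [hD]
    simp only
    rw [abs_mul]
    have h1 : |χ ((x - a) / ℓ) ^ 2 - 1| ≤ 1 := by
      rw [abs_le]
      constructor
      · nlinarith [hχ_nonneg ((x - a) / ℓ)]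
      · nlinarith [hχ_nonneg ((x - a) / ℓ), hχ_le ((x - a) / ℓ)]
    calc |χ ((x - a) / ℓ) ^ 2 - 1| * |_| ≤ 1 * 1 := by
          exact mul_le_mul h1 (hS x) (abs_nonneg _) zero_le_one
      _ = 1 := by norm_num
  have hDcont : Continuous D := by rw [hD]; fun_prop
  have hScont : Continuous (fun x : ℝ =>
      Real.sin (π * m * (x - a) / ℓ) * Real.sin (π * m' * (x - a) / ℓ)) := by fun_prop
  -- split points
  set b1 := a + ε * ℓ with hb1
  set b2 := a + (1 - ε) * ℓ with hb2
  have hab1 : a ≤ b1 := by nlinarith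
  have hb1b2 : b1 ≤ b2 := by nlinarith
  have hb2al : b2 ≤ a + ℓ := by nlinarith
  have hFint : ∫ x in Set.Icc a (a + ℓ), F x = ∫ x in a..(a + ℓ), F x := by
    rw [MeasureTheory.integral_Icc_eq_integral_Ioc,
      ← intervalIntegral.integral_of_le (by linarith : a ≤ a + ℓ)]
  have hFeqD : ∀ x : ℝ, F x = D x + (Real.sin (π * m * (x - a) / ℓ) *
      Real.sin (π * m' * (x - a) / ℓ)) := by
    intro x; rw [hF, hD]; ring
  have hFi : ∫ x in a..(a + ℓ), F x = ∫ x in a..(a + ℓ), D x := by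
    simp_rw [hFeqD]
    rw [intervalIntegral.integral_add (hDcont.intervalIntegrable _ _)
      (hScont.intervalIntegrable _ _)]
    have := sin_orth a ℓ hℓ m m' hmm'
    rw [this, add_zero]
  have hDi : IntervalIntegrable D volume a b1 := hDcont.intervalIntegrable _ _
  have hsplit : ∫ x in a..(a + ℓ), D x =
      (∫ x in a..b1, D x) + (∫ x in b1..b2, D x) + ∫ x in b2..(a + ℓ), D x := by
    rw [intervalIntegral.integral_add_adjacent_intervals
        (hDcont.intervalIntegrable _ _) (hDcont.intervalIntegrable _ _),
      intervalIntegral.integral_add_adjacent_intervals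
        (hDcont.intervalIntegrable _ _) (hDcont.intervalIntegrable _ _)]
  have hmid : ∫ x in b1..b2, D x = 0 := by
    rw [intervalIntegral.integral_congr (g := fun _ => (0:ℝ))]
    · simp
    · intro x hx
      rw [Set.uIcc_of_le hb1b2] at hx
      have hx1 : ε ≤ (x - a) / ℓ := by
        rw [le_div_iff₀ hℓ]
        have := hx.1
        rw [hb1] at this
        linarith
      have hx2 : (x - a) / ℓ ≤ 1 - ε := by
        rw [div_le_iff₀ hℓ]
        have := hx.2
        rw [hb2] at this
        linarith
      have := hχ_one ((x - a) / ℓ) ⟨hx1, hx2⟩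
      simp only [hD, this]
      ring
  have hedge : ∀ u v : ℝ, u ≤ v → |∫ x in u..v, D x| ≤ v - u := by
    intro u v huv
    have := intervalIntegral.norm_integral_le_of_norm_le_const (C := 1)
      (f := D) (a := u) (b := v) (fun x _ => by rw [Real.norm_eq_abs]; exact hDbound x)
    rw [Real.norm_eq_abs] at this
    calc |∫ x in u..v, D x| ≤ 1 * |v - u| := this
      _ = v - u := by rw [one_mul, abs_of_nonneg (by linarith)]
  have hXbound : |∫ x in a..(a + ℓ), D x| ≤ 2 * (ε * ℓ) := by
    rw [hsplit, hmid, add_zero]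
    calc |(∫ x in a..b1, D x) + ∫ x in b2..(a + ℓ), D x|
        ≤ |∫ x in a..b1, D x| + |∫ x in b2..(a + ℓ), D x| := abs_add_le _ _
      _ ≤ (b1 - a) + ((a + ℓ) - b2) := add_le_add (hedge a b1 hab1) (hedge b2 (a+ℓ) hb2al)
      _ = 2 * (ε * ℓ) := by rw [hb1, hb2]; ring
  rw [hFint, hFi]
  rw [abs_mul, abs_of_nonneg (by linarith : (0:ℝ) ≤ δ / 2)]
  calc |∫ x in a..(a + ℓ), D x| * (δ / 2) ≤ 2 * (ε * ℓ) * (δ / 2) :=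
        mul_le_mul_of_nonneg_right hXbound (by linarith)
    _ = ε * ℓ * δ := by ring
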